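/- Let (Ω, P) be a probability space and X, W : Ω → ℝ independent with X ~ N(μ, σ²), σ > 0, and W ~ N(0, b²), b > 0, and let τ > 0. Define X⁽¹⁾ = X + τ·W and X⁽²⁾ = X − (1/τ)·W, and set σ²₁ = σ² + τ²b², σ²₂ = σ² + b²/τ², and ρ = (σ² − b²)/√(σ²₁·σ²₂). Then, for almost every x with respect to the law of X⁽¹⁾, the conditional distribution of X⁽²⁾ given X⁽¹⁾ = x is the Gaussian distribution N(μ + ρ·(σ₂/σ₁)·(x − μ), σ²₂·(1 − ρ²)). -/

import Mathlib

open MeasureTheory ProbabilityTheory Real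
open scoped ENNReal NNReal

noncomputable section

namespace FissionAux

/-- map of withDensity through a map with a measurable left inverse. -/
lemma map_withDensity {α β : Type*} [MeasurableSpace α] [MeasurableSpace β]
    (m : Measure α) (T : α → β) (T' : β → α) (hT : Measurable T) (hT' : Measurable T')
    (hinv : ∀ x, T' (T x) = x) (f : α → ℝ≥0∞) (hf : Measurable f) :
    Measure.map T (m.withDensity f) = (Measure.map T m).withDensity (fun y => f (T' y)) := by
  ext s hs
  rw [Measure.map_apply hT hs, withDensity_apply _ (hT hs), withDensity_apply _ hs,
    setLIntegral_map hs (show Measurable fun y => f (T' y) from hf.comp hT') hT]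
  simp_rw [hinv]

lemma gauss_prod_density (m₁ m₂ : ℝ) (v₁ v₂ : ℝ≥0) (h₁ : v₁ ≠ 0) (h₂ : v₂ ≠ 0) :
    (gaussianReal m₁ v₁).prod (gaussianReal m₂ v₂)
      = (volume : Measure (ℝ × ℝ)).withDensity
          (fun p => gaussianPDF m₁ v₁ p.1 * gaussianPDF m₂ v₂ p.2) := by
  rw [Measure.volume_eq_prod]
  refine (Measure.prod_eq (μ := gaussianReal m₁ v₁) (ν := gaussianReal m₂ v₂)
    fun s t hs ht => ?_)
  rw [withDensity_apply _ (hs.prod ht), ← Measure.prod_restrict,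
    lintegral_prod_mul ((measurable_gaussianPDF _ _).aemeasurable)
      ((measurable_gaussianPDF _ _).aemeasurable),
    gaussianReal_apply _ h₁, gaussianReal_apply _ h₂]

def lmap (p q r s : ℝ) : (ℝ × ℝ) →ₗ[ℝ] (ℝ × ℝ) where
  toFun := fun x => (p * x.1 + q * x.2, r * x.1 + s * x.2)
  map_add' := by intro x y; simp [Prod.ext_iff]; constructor <;> ring
  map_smul' := by intro c x; simp [Prod.ext_iff, smul_eq_mul]; constructor <;> ring

lemma det_lmap (p q r s : ℝ) : LinearMap.det (lmap p q r s) = p * s - q * r := by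
  have h : LinearMap.toMatrix (Module.Basis.finTwoProd ℝ) (Module.Basis.finTwoProd ℝ) (lmap p q r s)
      = !![p, q; r, s] := by
    ext i j
    fin_cases i <;> fin_cases j <;>
      simp [LinearMap.toMatrix_apply, lmap, Module.Basis.finTwoProd_zero, Module.Basis.finTwoProd_one]
  rw [← LinearMap.det_toMatrix (Module.Basis.finTwoProd ℝ), h, Matrix.det_fin_two_of]

lemma map_lmap_volume (p q r s : ℝ) (hD : p * s - q * r ≠ 0) :
    Measure.map (fun x : ℝ × ℝ => (p * x.1 + q * x.2, r * x.1 + s * x.2))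
        (volume : Measure (ℝ × ℝ))
      = ENNReal.ofReal |(p * s - q * r)⁻¹| • (volume : Measure (ℝ × ℝ)) := by
  have := Measure.map_linearMap_addHaar_eq_smul_addHaar (volume : Measure (ℝ × ℝ))
    (f := lmap p q r s) (by rw [det_lmap]; exact hD)
  rw [det_lmap] at this
  exact this

lemma density_identity (p q r s u v : ℝ) (horth : p * r + q * s = 0)
    (hA : 0 < p ^ 2 + q ^ 2) (hB : 0 < r ^ 2 + s ^ 2) :
    |(p * s - q * r)⁻¹| *
        (gaussianPDFReal 0 1 ((s * u - q * v) / (p * s - q * r)) *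
          gaussianPDFReal 0 1 ((-r * u + p * v) / (p * s - q * r)))
      = gaussianPDFReal 0 (p ^ 2 + q ^ 2).toNNReal u *
          gaussianPDFReal 0 (r ^ 2 + s ^ 2).toNNReal v := by
  set A := p ^ 2 + q ^ 2 with hAdef
  set B := r ^ 2 + s ^ 2 with hBdef
  set D := p * s - q * r with hDdef
  have hD2 : D ^ 2 = A * B := by
    rw [hAdef, hBdef, hDdef]
    linear_combination (-(p * r) - q * s) * horth
  have hDne : D ≠ 0 := by
    intro h
    rw [h] at hD2
    nlinarith
  have hcA : ((A.toNNReal : ℝ≥0) : ℝ) = A := Real.coe_toNNReal _ hA.le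
  have hcB : ((B.toNNReal : ℝ≥0) : ℝ) = B := Real.coe_toNNReal _ hB.le
  simp only [gaussianPDFReal, hcA, hcB, NNReal.coe_one, mul_one, sub_zero]
  have key : (s * u - q * v) ^ 2 + (-r * u + p * v) ^ 2 = B * u ^ 2 + A * v ^ 2 := by
    rw [hAdef, hBdef]
    linear_combination (-2 * u * v) * horth
  clear_value A B D
  have hexp : ((s * u - q * v) / D) ^ 2 + ((-r * u + p * v) / D) ^ 2
      = u ^ 2 / A + v ^ 2 / B := by
    rw [div_pow, div_pow, ← add_div, key, hD2]
    field_simp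
  have h2π : (0:ℝ) < 2 * π := by positivity
  have hsq : √(2 * π * A) * √(2 * π * B) = 2 * π * |D| := by
    rw [← Real.sqrt_mul (by positivity)]
    have h : 2 * π * A * (2 * π * B) = (2 * π) ^ 2 * D ^ 2 := by rw [hD2]; ring
    rw [h, Real.sqrt_mul (by positivity), Real.sqrt_sq h2π.le, Real.sqrt_sq_eq_abs]
  have e1 : rexp (-((s * u - q * v) / D) ^ 2 / 2) * rexp (-((-r * u + p * v) / D) ^ 2 / 2)
      = rexp (-u ^ 2 / (2 * A)) * rexp (-v ^ 2 / (2 * B)) := by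
    rw [← Real.exp_add, ← Real.exp_add]
    congr 1
    linear_combination (-(1:ℝ)/2) * hexp
  have hconst : |D⁻¹| * ((√(2 * π))⁻¹ * (√(2 * π))⁻¹)
      = (√(2 * π * A))⁻¹ * (√(2 * π * B))⁻¹ := by
    rw [← mul_inv (√(2 * π * A)) (√(2 * π * B)), hsq, abs_inv,
      ← mul_inv (√(2 * π)) (√(2 * π)), Real.mul_self_sqrt h2π.le, mul_inv (2 * π) |D|]
    ring
  calc |D⁻¹| * ((√(2 * π))⁻¹ * rexp (-((s * u - q * v) / D) ^ 2 / 2) *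
          ((√(2 * π))⁻¹ * rexp (-((-r * u + p * v) / D) ^ 2 / 2)))
      = (|D⁻¹| * ((√(2 * π))⁻¹ * (√(2 * π))⁻¹)) *
          (rexp (-((s * u - q * v) / D) ^ 2 / 2) * rexp (-((-r * u + p * v) / D) ^ 2 / 2)) := by
        ring_nf
    _ = ((√(2 * π * A))⁻¹ * (√(2 * π * B))⁻¹) *
          (rexp (-u ^ 2 / (2 * A)) * rexp (-v ^ 2 / (2 * B))) := by rw [hconst, e1]
    _ = (√(2 * π * A))⁻¹ * rexp (-u ^ 2 / (2 * A)) * ((√(2 * π * B))⁻¹ * rexp (-v ^ 2 / (2 * B))) := by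
        ring

lemma core (p q r s : ℝ) (horth : p * r + q * s = 0)
    (hA : 0 < p ^ 2 + q ^ 2) (hB : 0 < r ^ 2 + s ^ 2) :
    Measure.map (fun x : ℝ × ℝ => (p * x.1 + q * x.2, r * x.1 + s * x.2))
        ((gaussianReal 0 1).prod (gaussianReal 0 1))
      = (gaussianReal 0 (p ^ 2 + q ^ 2).toNNReal).prod
          (gaussianReal 0 (r ^ 2 + s ^ 2).toNNReal) := by
  have hD2 : (p * s - q * r) ^ 2 = (p ^ 2 + q ^ 2) * (r ^ 2 + s ^ 2) := by
    linear_combination (-(p * r) - q * s) * horth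
  have hDne : p * s - q * r ≠ 0 := by
    intro h
    rw [h] at hD2
    nlinarith
  have hT : Measurable (fun x : ℝ × ℝ => (p * x.1 + q * x.2, r * x.1 + s * x.2)) := by
    fun_prop
  have hT' : Measurable (fun y : ℝ × ℝ =>
      ((s * y.1 - q * y.2) / (p * s - q * r), (-r * y.1 + p * y.2) / (p * s - q * r))) := by
    fun_prop
  have hinv : ∀ x : ℝ × ℝ,
      (fun y : ℝ × ℝ => ((s * y.1 - q * y.2) / (p * s - q * r),
        (-r * y.1 + p * y.2) / (p * s - q * r)))
        ((fun x : ℝ × ℝ => (p * x.1 + q * x.2, r * x.1 + s * x.2)) x) = x := by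
    intro x
    simp only [Prod.ext_iff]
    constructor <;> (rw [div_eq_iff hDne]; ring)
  have hAnn : ((p ^ 2 + q ^ 2).toNNReal : ℝ≥0) ≠ 0 := by
    simp [Real.toNNReal_eq_zero, not_le, hA]
  have hBnn : ((r ^ 2 + s ^ 2).toNNReal : ℝ≥0) ≠ 0 := by
    simp [Real.toNNReal_eq_zero, not_le, hB]
  rw [gauss_prod_density 0 0 1 1 one_ne_zero one_ne_zero,
    map_withDensity _ _ _ hT hT' hinv _
      (show Measurable fun p : ℝ × ℝ => gaussianPDF 0 1 p.1 * gaussianPDF 0 1 p.2 from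
        ((measurable_gaussianPDF 0 1).comp measurable_fst).mul
          ((measurable_gaussianPDF 0 1).comp measurable_snd)),
    map_lmap_volume p q r s hDne, withDensity_smul_measure,
    gauss_prod_density 0 0 _ _ hAnn hBnn,
    ← withDensity_smul' _ _ ENNReal.ofReal_ne_top]
  congr 1
  funext y
  simp only [Pi.smul_apply, smul_eq_mul, gaussianPDF]
  rw [← ENNReal.ofReal_mul (gaussianPDFReal_nonneg _ _ _),
    ← ENNReal.ofReal_mul (abs_nonneg _),
    ← ENNReal.ofReal_mul (gaussianPDFReal_nonneg _ _ _)]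
  exact congrArg ENNReal.ofReal (density_identity p q r s y.1 y.2 horth hA hB)

def shiftKer (f : ℝ → ℝ) (hf : Measurable f) (m : Measure ℝ) [SFinite m] : Kernel ℝ ℝ where
  toFun := fun x => m.map (fun z => z + f x)
  measurable' := by
    refine Measure.measurable_of_measurable_coe _ fun s hs => ?_
    have hE : MeasurableSet {q : ℝ × ℝ | q.2 + f q.1 ∈ s} :=
      (measurable_snd.add (hf.comp measurable_fst)) hs
    have : (fun x => m.map (fun z => z + f x) s)
        = fun x => m (Prod.mk x ⁻¹' {q : ℝ × ℝ | q.2 + f q.1 ∈ s}) := by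
      funext x
      rw [Measure.map_apply (by fun_prop) hs]
      rfl
    rw [this]
    exact measurable_measure_prodMk_left hE

lemma shiftKer_apply (f : ℝ → ℝ) (hf : Measurable f) (m : Measure ℝ) [SFinite m] (x : ℝ) :
    shiftKer f hf m x = m.map (fun z => z + f x) := rfl

instance shiftKer_markov (f : ℝ → ℝ) (hf : Measurable f) (m : Measure ℝ)
    [IsProbabilityMeasure m] : IsMarkovKernel (shiftKer f hf m) :=
  ⟨fun x => by rw [shiftKer_apply]; exact Measure.isProbabilityMeasure_map (by fun_prop)⟩

lemma compProd_shiftKer (ν m : Measure ℝ) [SFinite ν] [IsProbabilityMeasure m]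
    (f : ℝ → ℝ) (hf : Measurable f) :
    ν ⊗ₘ shiftKer f hf m
      = Measure.map (fun p : ℝ × ℝ => (p.1, p.2 + f p.1)) (ν.prod m) := by
  have hH : Measurable (fun p : ℝ × ℝ => (p.1, p.2 + f p.1)) := by fun_prop
  ext s hs
  rw [Measure.compProd_apply hs, Measure.map_apply hH hs, Measure.prod_apply (hH hs)]
  congr 1
  funext x
  rw [shiftKer_apply, Measure.map_apply (by fun_prop) (measurable_prodMk_left hs)]
  rfl

end FissionAux

/-- The conditional distribution of `X⁽²⁾` given `X⁽¹⁾ = x` after Gaussian data fission with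
plug-in noise variance `b²` is `N(μ + ρ(σ₂/σ₁)(x - μ), σ²₂(1 - ρ²))`, for almost every `x`
with respect to the law of `X⁽¹⁾`. -/
theorem fission_conditional_distribution
    {Ω : Type*} [MeasurableSpace Ω] (P : Measure Ω) [IsProbabilityMeasure P]
    (X W : Ω → ℝ) (hX : Measurable X) (hW : Measurable W)
    (hXW : IndepFun X W P)
    (μ σ b : ℝ) (hσ : 0 < σ) (hb : 0 < b)
    (hXlaw : P.map X = gaussianReal μ ((σ ^ 2).toNNReal))
    (hWlaw : P.map W = gaussianReal 0 ((b ^ 2).toNNReal))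
    (τ : ℝ) (hτ : 0 < τ)
    (σ21 σ22 ρ : ℝ)
    (hσ21 : σ21 = σ ^ 2 + τ ^ 2 * b ^ 2)
    (hσ22 : σ22 = σ ^ 2 + b ^ 2 / τ ^ 2)
    (hρ : ρ = (σ ^ 2 - b ^ 2) / Real.sqrt (σ21 * σ22)) :
    ∀ᵐ x ∂(P.map (fun ω => X ω + τ * W ω)),
      condDistrib (fun ω => X ω - (1 / τ) * W ω) (fun ω => X ω + τ * W ω) P x
        = gaussianReal (μ + ρ * (Real.sqrt σ22 / Real.sqrt σ21) * (x - μ))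
            ((σ22 * (1 - ρ ^ 2)).toNNReal) := by
  have hτ' : τ ≠ 0 := hτ.ne'
  have hσ21pos : 0 < σ21 := by rw [hσ21]; positivity
  have hσ22pos : 0 < σ22 := by rw [hσ22]; positivity
  set c : ℝ := (σ ^ 2 - b ^ 2) / (σ ^ 2 + τ ^ 2 * b ^ 2) with hcdef
  have hc : ρ * (Real.sqrt σ22 / Real.sqrt σ21) = c := by
    have h1 : Real.sqrt σ21 ≠ 0 := (Real.sqrt_pos.mpr hσ21pos).ne'
    have h2 : Real.sqrt σ22 ≠ 0 := (Real.sqrt_pos.mpr hσ22pos).ne'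
    have hss : Real.sqrt σ21 * Real.sqrt σ21 = σ21 := Real.mul_self_sqrt hσ21pos.le
    rw [hρ, Real.sqrt_mul hσ21pos.le, hcdef, ← hσ21, div_mul_div_comm,
      show Real.sqrt σ21 * Real.sqrt σ22 * Real.sqrt σ21 = σ21 * Real.sqrt σ22 from by
        linear_combination Real.sqrt σ22 * hss,
      mul_comm σ21 (Real.sqrt σ22), ← div_div, mul_div_assoc, div_self h2, mul_one]
  have hρ2 : ρ ^ 2 = (σ ^ 2 - b ^ 2) ^ 2 / (σ21 * σ22) := by
    rw [hρ, div_pow, Real.sq_sqrt (by positivity)]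
  have hVr : ((1 - c) * σ) ^ 2 + (-(b * (1 / τ + c * τ))) ^ 2 = σ22 * (1 - ρ ^ 2) := by
    rw [hρ2, hcdef, hσ21, hσ22]
    field_simp
    ring
  have hsplit : σ21 * σ22 = (σ ^ 2 - b ^ 2) ^ 2 + (σ * b * (τ + 1 / τ)) ^ 2 := by
    rw [hσ21, hσ22]; field_simp; ring
  have hρlt : ρ ^ 2 < 1 := by
    rw [hρ2, div_lt_one (by positivity)]
    have h0 : 0 < (σ * b * (τ + 1 / τ)) ^ 2 := by positivity
    rw [hsplit]; linarith
  have hVrpos : 0 < σ22 * (1 - ρ ^ 2) := mul_pos hσ22pos (by linarith)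
  have horth : σ * ((1 - c) * σ) + (τ * b) * (-(b * (1 / τ + c * τ))) = 0 := by
    rw [hcdef]; field_simp; ring
  have hApos : 0 < σ ^ 2 + (τ * b) ^ 2 := by positivity
  have hBpos : 0 < ((1 - c) * σ) ^ 2 + (-(b * (1 / τ + c * τ))) ^ 2 := by
    rw [hVr]; exact hVrpos
  have hf : Measurable (fun x : ℝ => μ + ρ * (Real.sqrt σ22 / Real.sqrt σ21) * (x - μ)) := by
    fun_prop
  set Vnn : ℝ≥0 := (σ22 * (1 - ρ ^ 2)).toNNReal with hVnndef
  set κ : Kernel ℝ ℝ := FissionAux.shiftKer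
    (fun x : ℝ => μ + ρ * (Real.sqrt σ22 / Real.sqrt σ21) * (x - μ)) hf
    (gaussianReal 0 Vnn) with hκdef
  -- laws of standardized variables
  have h1map : Measure.map (fun x : ℝ => σ * x + μ) (gaussianReal 0 1)
      = gaussianReal μ ((σ ^ 2).toNNReal) := by
    have e1 := gaussianReal_map_const_mul (μ := (0:ℝ)) (v := (1:ℝ≥0)) σ
    rw [mul_zero] at e1
    have e2 : gaussianReal (0:ℝ) (NNReal.mk (σ ^ 2) (sq_nonneg σ) * 1)
        = gaussianReal 0 ((σ ^ 2).toNNReal) := by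
      congr 1
      ext
      simp [Real.coe_toNNReal _ (sq_nonneg σ)]
    calc Measure.map (fun x : ℝ => σ * x + μ) (gaussianReal 0 1)
        = Measure.map (fun y : ℝ => y + μ)
            (Measure.map (fun x : ℝ => σ * x) (gaussianReal 0 1)) := by
          rw [Measure.map_map (measurable_add_const μ) (measurable_const_mul σ)]; rfl
      _ = gaussianReal μ ((σ ^ 2).toNNReal) := by
          rw [show Measure.map (fun x : ℝ => σ * x) (gaussianReal 0 1)
              = Measure.map (σ * ·) (gaussianReal 0 1) from rfl, e1, e2,
            show (fun y : ℝ => y + μ) = (· + μ) from rfl,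
            gaussianReal_map_add_const, zero_add]
  have h2map : Measure.map (fun x : ℝ => b * x) (gaussianReal 0 1)
      = gaussianReal 0 ((b ^ 2).toNNReal) := by
    have e1 := gaussianReal_map_const_mul (μ := (0:ℝ)) (v := (1:ℝ≥0)) b
    rw [mul_zero] at e1
    have e2 : gaussianReal (0:ℝ) (NNReal.mk (b ^ 2) (sq_nonneg b) * 1)
        = gaussianReal 0 ((b ^ 2).toNNReal) := by
      congr 1
      ext
      simp [Real.coe_toNNReal _ (sq_nonneg b)]
    rw [show Measure.map (fun x : ℝ => b * x) (gaussianReal 0 1)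
        = Measure.map (b * ·) (gaussianReal 0 1) from rfl, e1, e2]
  have step0 : P.map (fun ω => (X ω, W ω))
      = (gaussianReal μ ((σ ^ 2).toNNReal)).prod (gaussianReal 0 ((b ^ 2).toNNReal)) := by
    rw [← hXlaw, ← hWlaw]
    exact (indepFun_iff_map_prod_eq_prod_map_map hX.aemeasurable hW.aemeasurable).mp hXW
  have haff : (gaussianReal μ ((σ ^ 2).toNNReal)).prod (gaussianReal 0 ((b ^ 2).toNNReal))
      = Measure.map (fun p : ℝ × ℝ => (σ * p.1 + μ, b * p.2))
          ((gaussianReal 0 1).prod (gaussianReal 0 1)) := by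
    rw [← h1map, ← h2map,
      Measure.map_prod_map _ _ (by fun_prop : Measurable fun x : ℝ => σ * x + μ)
        (by fun_prop : Measurable fun x : ℝ => b * x)]
    have hfn : Prod.map (fun x : ℝ => σ * x + μ) (fun x : ℝ => b * x)
        = fun p : ℝ × ℝ => (σ * p.1 + μ, b * p.2) := by funext p; rfl
    rw [hfn]
  have hcore := FissionAux.core σ (τ * b) ((1 - c) * σ) (-(b * (1 / τ + c * τ)))
    horth hApos hBpos
  have hBeq : ((((1 - c) * σ) ^ 2 + (-(b * (1 / τ + c * τ))) ^ 2).toNNReal) = Vnn :=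
    congrArg Real.toNNReal hVr
  -- mean shift of the first coordinate
  have hshift : Measure.map (fun p : ℝ × ℝ => (p.1 + μ, p.2))
        ((gaussianReal 0 ((σ ^ 2 + (τ * b) ^ 2).toNNReal)).prod (gaussianReal 0 Vnn))
      = (gaussianReal μ ((σ ^ 2 + (τ * b) ^ 2).toNNReal)).prod (gaussianReal 0 Vnn) := by
    have h := Measure.map_prod_map (gaussianReal 0 ((σ ^ 2 + (τ * b) ^ 2).toNNReal))
      (gaussianReal 0 Vnn) (measurable_add_const μ) measurable_id
    rw [Measure.map_id] at h
    have hfn : Prod.map (fun y : ℝ => y + μ) (id : ℝ → ℝ)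
        = fun p : ℝ × ℝ => (p.1 + μ, p.2) := by
      funext p; rfl
    rw [hfn] at h
    rw [← h, show (fun y : ℝ => y + μ) = (· + μ) from rfl, gaussianReal_map_add_const, zero_add]
  -- composition identity
  have hcomp : (fun p : ℝ × ℝ => (p.1 + τ * p.2, p.1 - 1 / τ * p.2))
        ∘ (fun p : ℝ × ℝ => (σ * p.1 + μ, b * p.2))
      = (fun p : ℝ × ℝ => (p.1, p.2 + (μ + ρ * (Real.sqrt σ22 / Real.sqrt σ21) * (p.1 - μ))))
        ∘ ((fun p : ℝ × ℝ => (p.1 + μ, p.2))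
          ∘ (fun x : ℝ × ℝ => (σ * x.1 + (τ * b) * x.2,
              ((1 - c) * σ) * x.1 + (-(b * (1 / τ + c * τ))) * x.2))) := by
    funext p
    simp only [Function.comp_apply, Prod.mk.injEq]
    constructor
    · ring
    · rw [hc, hcdef]
      field_simp
      ring
  -- the joint law
  have hpair : Measurable fun ω => (X ω + τ * W ω, X ω - 1 / τ * W ω) := by fun_prop
  have hjoint : P.map (fun ω => (X ω + τ * W ω, X ω - 1 / τ * W ω))
      = Measure.map (fun p : ℝ × ℝ =>
            (p.1, p.2 + (μ + ρ * (Real.sqrt σ22 / Real.sqrt σ21) * (p.1 - μ))))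
          ((gaussianReal μ ((σ ^ 2 + (τ * b) ^ 2).toNNReal)).prod (gaussianReal 0 Vnn)) := by
    calc P.map (fun ω => (X ω + τ * W ω, X ω - 1 / τ * W ω))
        = Measure.map (fun p : ℝ × ℝ => (p.1 + τ * p.2, p.1 - 1 / τ * p.2))
            (P.map (fun ω => (X ω, W ω))) := by
          rw [Measure.map_map (by fun_prop) (hX.prodMk hW)]; rfl
      _ = Measure.map (fun p : ℝ × ℝ => (p.1 + τ * p.2, p.1 - 1 / τ * p.2))
            (Measure.map (fun p : ℝ × ℝ => (σ * p.1 + μ, b * p.2))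
              ((gaussianReal 0 1).prod (gaussianReal 0 1))) := by rw [step0, haff]
      _ = Measure.map ((fun p : ℝ × ℝ => (p.1 + τ * p.2, p.1 - 1 / τ * p.2))
            ∘ (fun p : ℝ × ℝ => (σ * p.1 + μ, b * p.2)))
            ((gaussianReal 0 1).prod (gaussianReal 0 1)) :=
          Measure.map_map (by fun_prop) (by fun_prop)
      _ = Measure.map ((fun p : ℝ × ℝ =>
              (p.1, p.2 + (μ + ρ * (Real.sqrt σ22 / Real.sqrt σ21) * (p.1 - μ))))
            ∘ ((fun p : ℝ × ℝ => (p.1 + μ, p.2))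
              ∘ (fun x : ℝ × ℝ => (σ * x.1 + (τ * b) * x.2,
                  ((1 - c) * σ) * x.1 + (-(b * (1 / τ + c * τ))) * x.2))))
            ((gaussianReal 0 1).prod (gaussianReal 0 1)) := by rw [hcomp]
      _ = Measure.map (fun p : ℝ × ℝ =>
              (p.1, p.2 + (μ + ρ * (Real.sqrt σ22 / Real.sqrt σ21) * (p.1 - μ))))
            (Measure.map (fun p : ℝ × ℝ => (p.1 + μ, p.2))
              (Measure.map (fun x : ℝ × ℝ => (σ * x.1 + (τ * b) * x.2,
                  ((1 - c) * σ) * x.1 + (-(b * (1 / τ + c * τ))) * x.2))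
                ((gaussianReal 0 1).prod (gaussianReal 0 1)))) := by
          rw [Measure.map_map
              (by fun_prop : Measurable fun p : ℝ × ℝ => (p.1 + μ, p.2))
              (by fun_prop : Measurable fun x : ℝ × ℝ => (σ * x.1 + (τ * b) * x.2,
                ((1 - c) * σ) * x.1 + (-(b * (1 / τ + c * τ))) * x.2)),
            Measure.map_map
              (by fun_prop : Measurable fun p : ℝ × ℝ =>
                (p.1, p.2 + (μ + ρ * (Real.sqrt σ22 / Real.sqrt σ21) * (p.1 - μ))))
              (Measurable.comp
                (by fun_prop : Measurable fun p : ℝ × ℝ => (p.1 + μ, p.2))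
                (by fun_prop : Measurable fun x : ℝ × ℝ => (σ * x.1 + (τ * b) * x.2,
                  ((1 - c) * σ) * x.1 + (-(b * (1 / τ + c * τ))) * x.2)))]
      _ = Measure.map (fun p : ℝ × ℝ =>
              (p.1, p.2 + (μ + ρ * (Real.sqrt σ22 / Real.sqrt σ21) * (p.1 - μ))))
            ((gaussianReal μ ((σ ^ 2 + (τ * b) ^ 2).toNNReal)).prod (gaussianReal 0 Vnn)) := by
          rw [hcore, hBeq, hshift]
  have hcompProd : P.map (fun ω => (X ω + τ * W ω, X ω - 1 / τ * W ω))
      = (gaussianReal μ ((σ ^ 2 + (τ * b) ^ 2).toNNReal)) ⊗ₘ κ := by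
    rw [hjoint, hκdef, FissionAux.compProd_shiftKer]
  have hX1 : Measurable fun ω => X ω + τ * W ω := by fun_prop
  have hX2 : Measurable fun ω => X ω - 1 / τ * W ω := by fun_prop
  have hfst : P.map (fun ω => X ω + τ * W ω)
      = gaussianReal μ ((σ ^ 2 + (τ * b) ^ 2).toNNReal) := by
    have h₁ : P.map (fun ω => X ω + τ * W ω)
        = (P.map (fun ω => (X ω + τ * W ω, X ω - 1 / τ * W ω))).fst := by
      rw [Measure.fst, Measure.map_map measurable_fst hpair]; rfl
    rw [h₁, hcompProd, Measure.fst_compProd]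
  have hκ' : P.map (fun ω => (X ω + τ * W ω, X ω - 1 / τ * W ω))
      = (P.map (fun ω => X ω + τ * W ω)) ⊗ₘ κ := by
    rw [hfst]; exact hcompProd
  have hae := condDistrib_ae_eq_of_measure_eq_compProd_of_measurable (μ := P) hX1 hX2 (κ := κ) hκ'
  have hgoal : ∀ᵐ x ∂(P.map (fun ω => X ω + τ * W ω)),
      condDistrib (fun ω => X ω - 1 / τ * W ω) (fun ω => X ω + τ * W ω) P x
        = gaussianReal (μ + ρ * (Real.sqrt σ22 / Real.sqrt σ21) * (x - μ)) Vnn := by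
    filter_upwards [hae] with x hx
    rw [hx, hκdef, FissionAux.shiftKer_apply]
    rw [show (fun z : ℝ => z + (μ + ρ * (Real.sqrt σ22 / Real.sqrt σ21) * (x - μ)))
      = (· + (μ + ρ * (Real.sqrt σ22 / Real.sqrt σ21) * (x - μ))) from rfl,
      gaussianReal_map_add_const, zero_add]
  exact hgoal
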